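/- In ℓ¹, the vectors x = (1,2,0,0,…) and y = (2,1,0,0,…) are linearly independent over ℝ, yet Λ(x,y) = 0 (with respect to the semi-inner product g on ℓ¹). Hence Λ(x,y) = 0 does not imply linear dependence. -/

import Mathlib

open scoped ENNReal

/-- The semi-inner product on `ℓ¹`: `g(x,y) = ‖x‖₁ · ∑ₖ sgn(ξₖ) ηₖ`. -/
noncomputable def gL1 (x y : lp (fun _ : ℕ => ℝ) 1) : ℝ :=
  ‖x‖ * ∑' k : ℕ, Real.sign (x k) * y k

/-- `Λ(x,y) := (‖x‖²·‖y‖² − |g(x,y)|·|g(y,x)|)^{1/2}` on `ℓ¹`. -/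
noncomputable def LamL1 (x y : lp (fun _ : ℕ => ℝ) 1) : ℝ :=
  Real.sqrt (‖x‖ ^ 2 * ‖y‖ ^ 2 - |gL1 x y| * |gL1 y x|)

lemma norm_pair (a b : ℝ) :
    ‖(lp.single 1 0 a + lp.single 1 1 b : lp (fun _ : ℕ => ℝ) 1)‖ = |a| + |b| := by
  have h : (lp.single 1 0 a + lp.single 1 1 b : lp (fun _ : ℕ => ℝ) 1)
      = ∑ i ∈ ({0, 1} : Finset ℕ), lp.single 1 i (if i = 0 then a else b) := by
    simp [Finset.sum_pair (by norm_num : (0:ℕ) ≠ 1)]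
  have hp : (0:ℝ) < (1 : ℝ≥0∞).toReal := by norm_num
  have := lp.norm_sum_single (p := 1) hp (fun i : ℕ => if i = 0 then a else b) ({0, 1} : Finset ℕ)
  rw [← h] at this
  simp only [ENNReal.toReal_one, Real.rpow_one] at this
  rw [this, Finset.sum_pair (by norm_num : (0:ℕ) ≠ 1)]
  simp

lemma coe_pair (a b : ℝ) (k : ℕ) :
    (lp.single 1 0 a + lp.single 1 1 b : lp (fun _ : ℕ => ℝ) 1) k
      = if k = 0 then a else if k = 1 then b else 0 := by
  rw [lp.coeFn_add]
  simp only [Pi.add_apply, lp.single_apply]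
  rcases k with _ | _ | k <;> simp

/-- In `ℓ¹`, the vectors `x = (1,2,0,…)` and `y = (2,1,0,…)` are linearly
independent, yet `Λ(x,y) = 0`: `Λ(x,y) = 0` does not imply linear dependence. -/
theorem LamL1_eq_zero_not_imp_dependent :
    ∀ x y : lp (fun _ : ℕ => ℝ) 1,
      x = lp.single 1 0 (1 : ℝ) + lp.single 1 1 (2 : ℝ) →
      y = lp.single 1 0 (2 : ℝ) + lp.single 1 1 (1 : ℝ) →
      LinearIndependent ℝ ![x, y] ∧ LamL1 x y = 0 := by

  intro x y hx hy
  have hxk : ∀ k, (x : ∀ _ : ℕ, ℝ) k = if k = 0 then 1 else if k = 1 then 2 else 0 := by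
    intro k; rw [hx]; exact coe_pair 1 2 k
  have hyk : ∀ k, (y : ∀ _ : ℕ, ℝ) k = if k = 0 then 2 else if k = 1 then 1 else 0 := by
    intro k; rw [hy]; exact coe_pair 2 1 k
  have hnx : ‖x‖ = 3 := by rw [hx, norm_pair]; norm_num
  have hny : ‖y‖ = 3 := by rw [hy, norm_pair]; norm_num
  constructor
  · rw [LinearIndependent.pair_iff]
    intro s t hst
    have h0 := congrFun (congrArg (fun z : lp (fun _ : ℕ => ℝ) 1 => (z : ∀ _ : ℕ, ℝ)) hst) 0
    have h1 := congrFun (congrArg (fun z : lp (fun _ : ℕ => ℝ) 1 => (z : ∀ _ : ℕ, ℝ)) hst) 1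
    simp only [lp.coeFn_add, lp.coeFn_smul, Pi.add_apply, Pi.smul_apply, smul_eq_mul,
      lp.coeFn_zero, Pi.zero_apply, hxk, hyk] at h0 h1
    norm_num at h0 h1
    constructor <;> linarith
  · have key : ∀ (f g : ∀ _ : ℕ, ℝ),
        (∀ k, 2 ≤ k → f k = 0) →
        (∑' k : ℕ, Real.sign (f k) * g k)
          = Real.sign (f 0) * g 0 + Real.sign (f 1) * g 1 := by
      intro f g hf
      rw [tsum_eq_sum (s := {0, 1})]
      · rw [Finset.sum_pair (by norm_num : (0:ℕ) ≠ 1)]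
      · intro k hk
        have h2 : 2 ≤ k := by
          simp only [Finset.mem_insert, Finset.mem_singleton] at hk
          omega
        rw [hf k h2, Real.sign_zero, zero_mul]
    have hx2 : ∀ k, 2 ≤ k → (x : ∀ _ : ℕ, ℝ) k = 0 := by
      intro k hk; rw [hxk k]
      rw [if_neg (by omega), if_neg (by omega)]
    have hy2 : ∀ k, 2 ≤ k → (y : ∀ _ : ℕ, ℝ) k = 0 := by
      intro k hk; rw [hyk k]
      rw [if_neg (by omega), if_neg (by omega)]
    have hgxy : gL1 x y = 9 := by
      unfold gL1
      rw [hnx, key _ _ hx2, hxk 0, hxk 1, hyk 0, hyk 1]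
      norm_num [Real.sign_of_pos]
    have hgyx : gL1 y x = 9 := by
      unfold gL1
      rw [hny, key _ _ hy2, hxk 0, hxk 1, hyk 0, hyk 1]
      norm_num [Real.sign_of_pos]
    unfold LamL1
    rw [hnx, hny, hgxy, hgyx]
    norm_num
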